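/- For every positive integer n, every doubly stochastic n×n matrix M, and every real number κ with 0 ≤ κ ≤ (7n−4)/(8n−4), the pair (M,κ) is a yes-instance of DEMAND-AWARE WEAK DIRECT THROUGHPUT; that is, there exist an n×n matrix B of nonnegative integers with all row and column sums equal to 2n−1 and an n×n matrix C with 0 ≤ C_{u,v} ≤ M_{u,v} for all u,v, Σ_{u,v} C_{u,v} ≥ κ·n, and B_{u,v} ≥ (2n−1)·C_{u,v} for all u,v. -/

import Mathlib

open Finset

/-- An `n × n` real matrix is doubly stochastic if all entries are nonnegative and
every row and every column sums to `1`. -/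
def DoublyStochastic {n : ℕ} (M : Matrix (Fin n) (Fin n) ℝ) : Prop :=
  (∀ i j, 0 ≤ M i j) ∧ (∀ i, ∑ j, M i j = 1) ∧ (∀ j, ∑ i, M i j = 1)

/-- Adjacency matrix of a directed `(2n−1)`-regular multigraph on `n` vertices:
a matrix of natural numbers whose every row and every column sums to `2n − 1`. -/
def IsAdjMatrix {n : ℕ} (B : Matrix (Fin n) (Fin n) ℕ) : Prop :=
  (∀ i, ∑ j, B i j = 2 * n - 1) ∧ (∀ j, ∑ i, B i j = 2 * n - 1)

/-- Number of traversals of the arc `(u,v)` by the walk `P`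
(a walk is a list of vertices of length at least 2). -/
def arcCount {n : ℕ} (P : List (Fin n)) (u v : Fin n) : ℕ :=
  (P.zip P.tail).count (u, v)

/-- The multigraph with adjacency matrix `B` can host the nonnegative demand matrix `C`:
there is a finitely supported assignment of nonnegative reals to walks such that
for every pair `(u,v)` the total value on walks from `u` to `v` equals `(2n−1)·C u v`,
and the total usage of each arc `(u,v)` is at most its capacity `B u v`. -/
def CanHost {n : ℕ} (B : Matrix (Fin n) (Fin n) ℕ) (C : Matrix (Fin n) (Fin n) ℝ) : Prop :=
  ∃ (S : Finset (List (Fin n))) (f : List (Fin n) → ℝ),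
    (∀ P ∈ S, 2 ≤ P.length) ∧
    (∀ P ∈ S, 0 ≤ f P) ∧
    (∀ u v : Fin n,
      (∑ P ∈ S, if P.head? = some u ∧ P.getLast? = some v then f P else 0)
        = (2 * (n : ℝ) - 1) * C u v) ∧
    (∀ u v : Fin n, (∑ P ∈ S, f P * (arcCount P u v : ℝ)) ≤ (B u v : ℝ))

/-- `(M, κ)` is a yes-instance of DEMAND-AWARE THROUGHPUT. -/
def DATYes {n : ℕ} (M : Matrix (Fin n) (Fin n) ℝ) (κ : ℝ) : Prop :=
  ∃ B : Matrix (Fin n) (Fin n) ℕ, IsAdjMatrix B ∧ CanHost B (κ • M)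

/-- `(M, κ)` is a yes-instance of DEMAND-AWARE DIRECT THROUGHPUT. -/
def DADTYes {n : ℕ} (M : Matrix (Fin n) (Fin n) ℝ) (κ : ℝ) : Prop :=
  ∃ B : Matrix (Fin n) (Fin n) ℕ, IsAdjMatrix B ∧
    ∀ u v, (2 * (n : ℝ) - 1) * κ * M u v ≤ (B u v : ℝ)

/-- `(M, κ)` is a yes-instance of DEMAND-AWARE WEAK THROUGHPUT. -/
def DAWTYes {n : ℕ} (M : Matrix (Fin n) (Fin n) ℝ) (κ : ℝ) : Prop :=
  ∃ (B : Matrix (Fin n) (Fin n) ℕ) (C : Matrix (Fin n) (Fin n) ℝ),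
    IsAdjMatrix B ∧ (∀ u v, 0 ≤ C u v ∧ C u v ≤ M u v) ∧
    (κ * n ≤ ∑ u, ∑ v, C u v) ∧ CanHost B C

/-- `(M, κ)` is a yes-instance of DEMAND-AWARE WEAK DIRECT THROUGHPUT. -/
def DAWDTYes {n : ℕ} (M : Matrix (Fin n) (Fin n) ℝ) (κ : ℝ) : Prop :=
  ∃ (B : Matrix (Fin n) (Fin n) ℕ) (C : Matrix (Fin n) (Fin n) ℝ),
    IsAdjMatrix B ∧ (∀ u v, 0 ≤ C u v ∧ C u v ≤ M u v) ∧
    (κ * n ≤ ∑ u, ∑ v, C u v) ∧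
    (∀ u v, (2 * (n : ℝ) - 1) * C u v ≤ (B u v : ℝ))

section AuxRounding
open Module

private lemma sum_subtype_ite {α : Type*} [Fintype α] [DecidableEq α] (E : Finset α)
    (f : {p // p ∈ E} → ℝ) (q : α) :
    (∑ p : {p // p ∈ E}, if (p : α) = q then f p else 0) =
      if h : q ∈ E then f ⟨q, h⟩ else 0 := by
  by_cases h : q ∈ E
  · rw [dif_pos h]
    calc (∑ p : {p // p ∈ E}, if (p : α) = q then f p else 0)
        = ∑ p : {p // p ∈ E}, if p = ⟨q, h⟩ then f p else 0 :=
          Finset.sum_congr rfl fun p _ => if_congr (by simp [Subtype.ext_iff]) rfl rfl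
      _ = f ⟨q, h⟩ := Fintype.sum_ite_eq' _ _
  · rw [dif_neg h]
    apply Finset.sum_eq_zero
    intro p _
    rw [if_neg]
    rintro rfl
    exact h p.2

private lemma sum_subtype_ite' {α : Type*} [Fintype α] [DecidableEq α] (E : Finset α)
    (c : ℝ) (q : α) (h : q ∈ E) :
    (∑ p : {p // p ∈ E}, if q = (p : α) then c else 0) = c := by
  calc (∑ p : {p // p ∈ E}, if q = (p : α) then c else 0)
      = ∑ p : {p // p ∈ E}, if p = ⟨q, h⟩ then c else 0 :=
        Finset.sum_congr rfl fun p _ => if_congr (by simp [Subtype.ext_iff, eq_comm]) rfl rfl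
    _ = c := Fintype.sum_ite_eq' _ _

private lemma exists_kernel_vector {n : ℕ} (E : Finset (Fin n × Fin n)) (hE : E.Nonempty)
    (S1 S2 : Finset (Fin n)) (hS1 : ∀ p ∈ E, p.1 ∈ S1) (hS2 : ∀ p ∈ E, p.2 ∈ S2)
    (hcard : S1.card + S2.card ≤ E.card) :
    ∃ y : Fin n → Fin n → ℝ,
      (∃ u v, y u v ≠ 0) ∧ (∀ u v, (u, v) ∉ E → y u v = 0) ∧
      (∀ u, ∑ v, y u v = 0) ∧ (∀ v, ∑ u, y u v = 0) := by
  classical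
  -- the linear map sending a vector supported on E to its row and column sums
  let Φ : ({p // p ∈ E} → ℝ) →ₗ[ℝ] ({u // u ∈ S1} → ℝ) × ({v // v ∈ S2} → ℝ) :=
    { toFun := fun y =>
        (fun u => ∑ p : {p // p ∈ E}, if (p : Fin n × Fin n).1 = (u : Fin n) then y p else 0,
         fun v => ∑ p : {p // p ∈ E}, if (p : Fin n × Fin n).2 = (v : Fin n) then y p else 0),
      map_add' := by
        intro a b
        refine Prod.ext (funext fun u => ?_) (funext fun v => ?_) <;>
        · simp only [Pi.add_apply, Prod.fst_add, Prod.snd_add]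
          rw [← Finset.sum_add_distrib]
          exact Finset.sum_congr rfl fun p _ => by split <;> simp
      map_smul' := by
        intro c a
        refine Prod.ext (funext fun u => ?_) (funext fun v => ?_) <;>
        · simp only [Pi.smul_apply, smul_eq_mul, RingHom.id_apply, Prod.smul_fst, Prod.smul_snd]
          rw [Finset.mul_sum]
          exact Finset.sum_congr rfl fun p _ => by split <;> simp }
  let ψ : (({u // u ∈ S1} → ℝ) × ({v // v ∈ S2} → ℝ)) →ₗ[ℝ] ℝ :=
    { toFun := fun w => (∑ u, w.1 u) - (∑ v, w.2 v),
      map_add' := by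
        intro a b
        simp only [Prod.fst_add, Prod.snd_add, Pi.add_apply, Finset.sum_add_distrib]
        ring
      map_smul' := by
        intro c a
        simp only [Prod.smul_fst, Prod.smul_snd, Pi.smul_apply, smul_eq_mul,
          RingHom.id_apply, ← Finset.mul_sum]
        ring }
  have hrange : ∀ y, Φ y ∈ LinearMap.ker ψ := by
    intro y
    rw [LinearMap.mem_ker]
    show (∑ u : {u // u ∈ S1}, ∑ p : {p // p ∈ E},
            if (p : Fin n × Fin n).1 = (u : Fin n) then y p else 0)
        - (∑ v : {v // v ∈ S2}, ∑ p : {p // p ∈ E},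
            if (p : Fin n × Fin n).2 = (v : Fin n) then y p else 0) = 0
    have h1 : ∀ p : {p // p ∈ E},
        (∑ u : {u // u ∈ S1}, if (p : Fin n × Fin n).1 = (u : Fin n) then y p else 0) = y p :=
      fun p => sum_subtype_ite' S1 (y p) (p : Fin n × Fin n).1 (hS1 _ p.2)
    have h2 : ∀ p : {p // p ∈ E},
        (∑ v : {v // v ∈ S2}, if (p : Fin n × Fin n).2 = (v : Fin n) then y p else 0) = y p :=
      fun p => sum_subtype_ite' S2 (y p) (p : Fin n × Fin n).2 (hS2 _ p.2)
    have hA : (∑ u : {u // u ∈ S1}, ∑ p : {p // p ∈ E},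
        if (p : Fin n × Fin n).1 = (u : Fin n) then y p else 0) = ∑ p : {p // p ∈ E}, y p := by
      rw [Finset.sum_comm]
      exact Finset.sum_congr rfl fun p _ => h1 p
    have hB : (∑ v : {v // v ∈ S2}, ∑ p : {p // p ∈ E},
        if (p : Fin n × Fin n).2 = (v : Fin n) then y p else 0) = ∑ p : {p // p ∈ E}, y p := by
      rw [Finset.sum_comm]
      exact Finset.sum_congr rfl fun p _ => h2 p
    rw [hA, hB, sub_self]
  have hψne : ψ ((fun _ => (1:ℝ)), (fun _ => (0:ℝ))) ≠ 0 := by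
    show (∑ _u : {u // u ∈ S1}, (1:ℝ)) - (∑ _v : {v // v ∈ S2}, (0:ℝ)) ≠ 0
    obtain ⟨p0, hp0⟩ := hE
    have hS1ne : S1.Nonempty := ⟨p0.1, hS1 _ hp0⟩
    have h0 : (0:ℝ) < S1.card := by exact_mod_cast Finset.card_pos.2 hS1ne
    rw [Finset.sum_const_zero, sub_zero, Finset.sum_const, nsmul_eq_mul, mul_one,
      card_univ, Fintype.card_coe]
    exact h0.ne'
  -- rank computation
  have hker_lt : finrank ℝ (LinearMap.ker ψ) < E.card := by
    have h1 : finrank ℝ (LinearMap.range ψ) + finrank ℝ (LinearMap.ker ψ)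
        = S1.card + S2.card := by
      rw [LinearMap.finrank_range_add_finrank_ker ψ]
      rw [Module.finrank_prod, Module.finrank_pi, Module.finrank_pi,
        Fintype.card_coe, Fintype.card_coe]
    have h2 : finrank ℝ (LinearMap.range ψ) ≠ 0 := by
      intro h
      rw [Submodule.finrank_eq_zero] at h
      exact hψne (by
        have : ψ ((fun _ => (1:ℝ)), (fun _ => (0:ℝ))) ∈ LinearMap.range ψ :=
          LinearMap.mem_range_self _ _
        rw [h] at this
        simpa using this)
    omega
  -- Φ restricted to ker ψ is not injective
  let Φ' : ({p // p ∈ E} → ℝ) →ₗ[ℝ] (LinearMap.ker ψ) := Φ.codRestrict _ hrange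
  have hnotinj : ¬ Function.Injective Φ' := by
    intro hinj
    have := LinearMap.finrank_le_finrank_of_injective hinj
    rw [Module.finrank_pi, Fintype.card_coe] at this
    omega
  have : LinearMap.ker Φ' ≠ ⊥ := fun h => hnotinj (LinearMap.ker_eq_bot.1 h)
  obtain ⟨y0, hy0mem, hy0ne⟩ := (Submodule.ne_bot_iff _).1 this
  have hΦy0 : Φ y0 = 0 := by
    have h := (LinearMap.mem_ker).1 hy0mem
    have := congrArg Subtype.val h
    simpa [Φ', LinearMap.codRestrict] using this
  -- extract the matrix
  refine ⟨fun u v => if h : (u, v) ∈ E then y0 ⟨(u, v), h⟩ else 0, ?_, ?_, ?_, ?_⟩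
  · obtain ⟨p, hp⟩ := Function.ne_iff.1 hy0ne
    refine ⟨(p : Fin n × Fin n).1, (p : Fin n × Fin n).2, ?_⟩
    have hmem : ((p : Fin n × Fin n).1, (p : Fin n × Fin n).2) ∈ E := by
      rw [Prod.mk.eta]; exact p.2
    dsimp only
    rw [dif_pos hmem]
    have heq : (⟨((p : Fin n × Fin n).1, (p : Fin n × Fin n).2), hmem⟩ : {p // p ∈ E}) = p :=
      Subtype.ext Prod.mk.eta
    rw [heq]
    simpa using hp
  · intro u v h
    dsimp only
    rw [dif_neg h]
  · intro u
    by_cases hu : u ∈ S1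
    · have hrow : (Φ y0).1 ⟨u, hu⟩ = 0 := by rw [hΦy0]; rfl
      have main : (∑ v, if h : (u, v) ∈ E then y0 ⟨(u, v), h⟩ else 0)
          = ∑ p : {p // p ∈ E}, if (p : Fin n × Fin n).1 = u then y0 p else 0 := by
       have step1 : ∀ v, (if h : (u, v) ∈ E then y0 ⟨(u, v), h⟩ else 0)
          = ∑ p : {p // p ∈ E}, if (p : Fin n × Fin n) = (u, v) then y0 p else 0 :=
        fun v => (sum_subtype_ite E y0 (u, v)).symm
       rw [Finset.sum_congr rfl fun v _ => step1 v, Finset.sum_comm]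
       refine Finset.sum_congr rfl fun p _ => ?_
       by_cases h : (p : Fin n × Fin n).1 = u
       · rw [if_pos h]
         calc (∑ v, if (p : Fin n × Fin n) = (u, v) then y0 p else 0)
             = ∑ v, if v = (p : Fin n × Fin n).2 then y0 p else 0 :=
               Finset.sum_congr rfl fun v _ => if_congr
                 (by constructor
                     · intro hq; rw [hq]
                     · rintro rfl; rw [← h, Prod.mk.eta]) rfl rfl
           _ = y0 p := Fintype.sum_ite_eq' _ _
       · rw [if_neg h]
         apply Finset.sum_eq_zero
         intro v _
         rw [if_neg]
         intro hq
         exact h (by rw [hq])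
      dsimp only
      rw [main]
      exact hrow
    · apply Finset.sum_eq_zero
      intro v _
      dsimp only
      rw [dif_neg]
      intro h
      exact hu (hS1 _ h)
  · intro v
    by_cases hv : v ∈ S2
    · have hcol : (Φ y0).2 ⟨v, hv⟩ = 0 := by rw [hΦy0]; rfl
      have main : (∑ u, if h : (u, v) ∈ E then y0 ⟨(u, v), h⟩ else 0)
          = ∑ p : {p // p ∈ E}, if (p : Fin n × Fin n).2 = v then y0 p else 0 := by
       have step1 : ∀ u, (if h : (u, v) ∈ E then y0 ⟨(u, v), h⟩ else 0)
          = ∑ p : {p // p ∈ E}, if (p : Fin n × Fin n) = (u, v) then y0 p else 0 :=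
        fun u => (sum_subtype_ite E y0 (u, v)).symm
       rw [Finset.sum_congr rfl fun u _ => step1 u, Finset.sum_comm]
       refine Finset.sum_congr rfl fun p _ => ?_
       by_cases h : (p : Fin n × Fin n).2 = v
       · rw [if_pos h]
         calc (∑ u, if (p : Fin n × Fin n) = (u, v) then y0 p else 0)
             = ∑ u, if u = (p : Fin n × Fin n).1 then y0 p else 0 :=
               Finset.sum_congr rfl fun u _ => if_congr
                 (by constructor
                     · intro hq; rw [hq]
                     · rintro rfl; rw [← h, Prod.mk.eta]) rfl rfl
           _ = y0 p := Fintype.sum_ite_eq' _ _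
       · rw [if_neg h]
         apply Finset.sum_eq_zero
         intro u _
         rw [if_neg]
         intro hq
         exact h (by rw [hq])
      dsimp only
      rw [main]
      exact hcol
    · apply Finset.sum_eq_zero
      intro u _
      dsimp only
      rw [dif_neg]
      intro h
      exact hv (hS2 _ h)

private noncomputable def fracSet {n : ℕ} (x : Fin n → Fin n → ℝ) : Finset (Fin n × Fin n) :=
  Finset.univ.filter fun p => 0 < x p.1 p.2 ∧ x p.1 p.2 < 1

private lemma mem_fracSet {n : ℕ} {x : Fin n → Fin n → ℝ} {p : Fin n × Fin n} :
    p ∈ fracSet x ↔ 0 < x p.1 p.2 ∧ x p.1 p.2 < 1 := by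
  simp [fracSet]

private lemma not_frac_val {n : ℕ} {x : Fin n → Fin n → ℝ} {u v : Fin n}
    (hx0 : 0 ≤ x u v) (hx1 : x u v ≤ 1) (h : (u, v) ∉ fracSet x) :
    x u v = 0 ∨ x u v = 1 := by
  rw [mem_fracSet] at h
  push_neg at h
  rcases eq_or_lt_of_le hx0 with h' | h'
  · exact Or.inl h'.symm
  · exact Or.inr (le_antisymm hx1 (h h'))

private lemma perturb {n : ℕ} (F x y : Fin n → Fin n → ℝ)
    (hx0 : ∀ u v, 0 ≤ x u v) (hx1 : ∀ u v, x u v ≤ 1)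
    (hy_supp : ∀ u v, (u, v) ∉ fracSet x → y u v = 0)
    (hy_ne : ∃ u v, y u v ≠ 0)
    (hyrow : ∀ u, ∑ v, y u v = 0) (hycol : ∀ v, ∑ u, y u v = 0)
    (hg : 0 ≤ ∑ u, ∑ v, F u v * y u v) :
    ∃ x' : Fin n → Fin n → ℝ,
      fracSet x' ⊂ fracSet x ∧ (∀ u v, 0 ≤ x' u v) ∧ (∀ u v, x' u v ≤ 1) ∧
      (∀ u, ∑ v, x' u v = ∑ v, x u v) ∧ (∀ v, ∑ u, x' u v = ∑ u, x u v) ∧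
      (∑ u, ∑ v, F u v * x u v) ≤ ∑ u, ∑ v, F u v * x' u v := by
  classical
  set supp : Finset (Fin n × Fin n) := Finset.univ.filter (fun p => y p.1 p.2 ≠ 0) with hsupp
  have hsupp_mem : ∀ p, p ∈ supp ↔ y p.1 p.2 ≠ 0 := by simp [hsupp]
  have hne : supp.Nonempty := by
    obtain ⟨u, v, h⟩ := hy_ne
    exact ⟨(u, v), (hsupp_mem _).2 h⟩
  have hsuppE : ∀ p ∈ supp, p ∈ fracSet x := by
    intro p hp
    by_contra hc
    exact (hsupp_mem p).1 hp (hy_supp p.1 p.2 (by rwa [Prod.mk.eta]))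
  set bound : Fin n × Fin n → ℝ := fun p =>
    if 0 < y p.1 p.2 then (1 - x p.1 p.2) / y p.1 p.2 else x p.1 p.2 / (- y p.1 p.2) with hbound
  obtain ⟨ps, hps, hmin⟩ := Finset.exists_min_image supp bound hne
  set ε : ℝ := bound ps with hε
  have hbpos : ∀ p ∈ supp, 0 < bound p := by
    intro p hp
    obtain ⟨hfx0, hfx1⟩ := mem_fracSet.1 (hsuppE p hp)
    have hy : y p.1 p.2 ≠ 0 := (hsupp_mem p).1 hp
    rw [hbound]
    dsimp only
    rcases lt_or_gt_of_ne hy with hlt | hgt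
    · rw [if_neg (not_lt.2 hlt.le)]
      exact div_pos hfx0 (by linarith)
    · rw [if_pos hgt]
      exact div_pos (by linarith) hgt
  have hεpos : 0 < ε := hbpos ps hps
  set x' : Fin n → Fin n → ℝ := fun u v => x u v + ε * y u v with hx'def
  have hx'val : ∀ u v, x' u v = x u v + ε * y u v := fun u v => rfl
  have key : ∀ u v, 0 ≤ x' u v ∧ x' u v ≤ 1 := by
    intro u v
    rw [hx'val]
    by_cases hy : y u v = 0
    · rw [hy, mul_zero, add_zero]
      exact ⟨hx0 u v, hx1 u v⟩
    · have hp : (u, v) ∈ supp := (hsupp_mem _).2 hy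
      obtain ⟨hfx0, hfx1⟩ := mem_fracSet.1 (hsuppE _ hp)
      have hle : ε ≤ bound (u, v) := hmin _ hp
      rcases lt_or_gt_of_ne hy with hlt | hgt
      · have hb : bound (u, v) = x u v / (- y u v) := by
          rw [hbound]
          dsimp only
          rw [if_neg (not_lt.2 hlt.le)]
        rw [hb] at hle
        have h2 : ε * (- y u v) ≤ x u v := (le_div_iff₀ (by linarith)).1 hle
        have h3 : ε * (- y u v) = -(ε * y u v) := by ring
        have h4 : ε * y u v ≤ 0 := mul_nonpos_of_nonneg_of_nonpos hεpos.le hlt.le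
        constructor <;> linarith
      · have hb : bound (u, v) = (1 - x u v) / y u v := by
          rw [hbound]
          dsimp only
          rw [if_pos hgt]
        rw [hb] at hle
        have h2 : ε * y u v ≤ 1 - x u v := (le_div_iff₀ hgt).1 hle
        have h4 : 0 ≤ ε * y u v := mul_nonneg hεpos.le hgt.le
        constructor <;> linarith
  have hsub : fracSet x' ⊆ fracSet x := by
    intro p hp
    by_contra hc
    have hy0 : y p.1 p.2 = 0 := hy_supp p.1 p.2 (by rwa [Prod.mk.eta])
    apply hc
    obtain ⟨h1, h2⟩ := mem_fracSet.1 hp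
    rw [hx'val, hy0, mul_zero, add_zero] at h1 h2
    exact mem_fracSet.2 ⟨h1, h2⟩
  have hps_val : x' ps.1 ps.2 = 0 ∨ x' ps.1 ps.2 = 1 := by
    have hy : y ps.1 ps.2 ≠ 0 := (hsupp_mem _).1 hps
    rw [hx'val]
    rcases lt_or_gt_of_ne hy with hlt | hgt
    · left
      have hb : ε = x ps.1 ps.2 / (- y ps.1 ps.2) := by
        rw [hε, hbound]
        dsimp only
        rw [if_neg (not_lt.2 hlt.le)]
      rw [hb, div_mul_eq_mul_div, mul_div_assoc]
      have hdd : y ps.1 ps.2 / -y ps.1 ps.2 = -1 := by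
        rw [div_neg, div_self hy]
      rw [hdd]
      ring
    · right
      have hb : ε = (1 - x ps.1 ps.2) / y ps.1 ps.2 := by
        rw [hε, hbound]
        dsimp only
        rw [if_pos hgt]
      rw [hb, div_mul_cancel₀ _ hy]
      ring
  have hnotmem : ps ∉ fracSet x' := by
    intro hmem
    obtain ⟨h1, h2⟩ := mem_fracSet.1 hmem
    rcases hps_val with h | h <;> rw [h] at h1 h2 <;> linarith
  refine ⟨x', (Finset.ssubset_iff_of_subset hsub).2 ⟨ps, hsuppE ps hps, hnotmem⟩,
    fun u v => (key u v).1, fun u v => (key u v).2, ?_, ?_, ?_⟩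
  · intro u
    show ∑ v, (x u v + ε * y u v) = ∑ v, x u v
    rw [Finset.sum_add_distrib, ← Finset.mul_sum, hyrow u, mul_zero, add_zero]
  · intro v
    show ∑ u, (x u v + ε * y u v) = ∑ u, x u v
    rw [Finset.sum_add_distrib, ← Finset.mul_sum, hycol v, mul_zero, add_zero]
  · have expand : ∀ u, ∑ v, F u v * (x u v + ε * y u v)
        = (∑ v, F u v * x u v) + ε * ∑ v, F u v * y u v := by
      intro u
      rw [Finset.mul_sum, ← Finset.sum_add_distrib]
      exact Finset.sum_congr rfl fun v _ => by ring
    have main : ∑ u, ∑ v, F u v * (x u v + ε * y u v)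
        = (∑ u, ∑ v, F u v * x u v) + ε * ∑ u, ∑ v, F u v * y u v := by
      rw [Finset.sum_congr rfl fun u (_ : u ∈ Finset.univ) => expand u, Finset.sum_add_distrib,
        ← Finset.mul_sum]
    show (∑ u, ∑ v, F u v * x u v) ≤ ∑ u, ∑ v, F u v * (x u v + ε * y u v)
    rw [main]
    have := mul_nonneg hεpos.le hg
    linarith

private lemma round_integral {n : ℕ} (F : Fin n → Fin n → ℝ) (R C : Fin n → ℕ)
    (x : Fin n → Fin n → ℝ) (hempty : fracSet x = ∅)
    (hx0 : ∀ u v, 0 ≤ x u v) (hx1 : ∀ u v, x u v ≤ 1)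
    (hrow : ∀ u, ∑ v, x u v = (R u : ℝ)) (hcol : ∀ v, ∑ u, x u v = (C v : ℝ)) :
    ∃ G : Fin n → Fin n → ℕ, (∀ u v, G u v ≤ 1) ∧ (∀ u, ∑ v, G u v = R u) ∧
      (∀ v, ∑ u, G u v = C v) ∧
      (∑ u, ∑ v, F u v * x u v) ≤ ∑ u, ∑ v, F u v * (G u v : ℝ) := by
  classical
  set G : Fin n → Fin n → ℕ := fun u v => if x u v = 1 then 1 else 0 with hG
  have hcast : ∀ u v, ((G u v : ℕ) : ℝ) = x u v := by
    intro u v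
    have hnin : (u, v) ∉ fracSet x := by
      rw [hempty]
      exact Finset.notMem_empty _
    rcases not_frac_val (hx0 u v) (hx1 u v) hnin with h | h <;>
      rw [hG] <;> dsimp only <;> rw [h] <;> norm_num
  refine ⟨G, ?_, ?_, ?_, ?_⟩
  · intro u v
    rw [hG]
    dsimp only
    split <;> omega
  · intro u
    have : ((∑ v, G u v : ℕ) : ℝ) = (R u : ℝ) := by
      push_cast
      rw [Finset.sum_congr rfl fun v _ => hcast u v]
      exact hrow u
    exact_mod_cast this
  · intro v
    have : ((∑ u, G u v : ℕ) : ℝ) = (C v : ℝ) := by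
      push_cast
      rw [Finset.sum_congr rfl fun u _ => hcast u v]
      exact hcol v
    exact_mod_cast this
  · apply le_of_eq
    exact Finset.sum_congr rfl fun u _ => Finset.sum_congr rfl fun v _ =>
      congrArg (F u v * ·) (hcast u v).symm

private lemma row_degree_two {n : ℕ} {x : Fin n → Fin n → ℝ} (R : Fin n → ℕ)
    (hx0 : ∀ u v, 0 ≤ x u v) (hx1 : ∀ u v, x u v ≤ 1)
    (hrow : ∀ u, ∑ v, x u v = (R u : ℝ)) {u : Fin n}
    (hu : u ∈ (fracSet x).image Prod.fst) :
    2 ≤ ((fracSet x).filter (fun p => p.1 = u)).card := by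
  classical
  obtain ⟨p0, hp0, hp0u⟩ := Finset.mem_image.1 hu
  have hfib_ne : p0 ∈ (fracSet x).filter (fun p => p.1 = u) :=
    Finset.mem_filter.2 ⟨hp0, hp0u⟩
  by_contra hlt
  push_neg at hlt
  have h1 : ((fracSet x).filter (fun p => p.1 = u)).card = 1 :=
    le_antisymm (by omega) (Finset.card_pos.2 ⟨p0, hfib_ne⟩)
  obtain ⟨q, hq⟩ := Finset.card_eq_one.1 h1
  have hqmem : q ∈ (fracSet x).filter (fun p => p.1 = u) := by
    rw [hq]
    exact Finset.mem_singleton_self q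
  obtain ⟨hqE, hq1⟩ := Finset.mem_filter.1 hqmem
  have hnot : ∀ w, w ≠ q.2 → (u, w) ∉ fracSet x := by
    intro w hw hmem
    have : (u, w) ∈ (fracSet x).filter (fun p => p.1 = u) := Finset.mem_filter.2 ⟨hmem, rfl⟩
    rw [hq] at this
    exact hw (congrArg Prod.snd (Finset.mem_singleton.1 this))
  set g : Fin n → ℕ := fun w => if x u w = 1 then 1 else 0 with hgdef
  have hgv : ∀ w, w ≠ q.2 → x u w = (g w : ℝ) := by
    intro w hw
    rcases not_frac_val (hx0 u w) (hx1 u w) (hnot w hw) with h | h <;>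
      rw [hgdef] <;> dsimp only <;> rw [h] <;> norm_num
  have hsum : x u q.2 = (R u : ℝ) - (∑ w ∈ Finset.univ.erase q.2, (g w : ℝ)) := by
    have h := hrow u
    rw [← Finset.add_sum_erase Finset.univ (fun w => x u w) (Finset.mem_univ q.2)] at h
    have h2 : ∑ w ∈ Finset.univ.erase q.2, x u w = ∑ w ∈ Finset.univ.erase q.2, (g w : ℝ) :=
      Finset.sum_congr rfl fun w hw => hgv w (Finset.ne_of_mem_erase hw)
    rw [h2] at h
    linarith
  have hfrac : 0 < x u q.2 ∧ x u q.2 < 1 := by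
    have hquv : (u, q.2) = q := by
      rw [← hq1]
    rw [show x u q.2 = x q.1 q.2 by rw [← hq1]]
    exact mem_fracSet.1 hqE
  set m : ℕ := ∑ w ∈ Finset.univ.erase q.2, g w with hm
  have hcastm : ((m : ℕ) : ℝ) = ∑ w ∈ Finset.univ.erase q.2, (g w : ℝ) := by
    rw [hm]
    push_cast
    rfl
  have ha : (m : ℝ) < R u := by
    rw [hcastm]
    linarith [hfrac.1, hsum]
  have hb : (R u : ℝ) < (m : ℝ) + 1 := by
    rw [hcastm]
    linarith [hfrac.2, hsum]
  have ha' : m < R u := by exact_mod_cast ha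
  have hb' : R u < m + 1 := by exact_mod_cast hb
  omega

private lemma col_degree_two {n : ℕ} {x : Fin n → Fin n → ℝ} (C : Fin n → ℕ)
    (hx0 : ∀ u v, 0 ≤ x u v) (hx1 : ∀ u v, x u v ≤ 1)
    (hcol : ∀ v, ∑ u, x u v = (C v : ℝ)) {v : Fin n}
    (hv : v ∈ (fracSet x).image Prod.snd) :
    2 ≤ ((fracSet x).filter (fun p => p.2 = v)).card := by
  classical
  obtain ⟨p0, hp0, hp0v⟩ := Finset.mem_image.1 hv
  have hfib_ne : p0 ∈ (fracSet x).filter (fun p => p.2 = v) :=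
    Finset.mem_filter.2 ⟨hp0, hp0v⟩
  by_contra hlt
  push_neg at hlt
  have h1 : ((fracSet x).filter (fun p => p.2 = v)).card = 1 :=
    le_antisymm (by omega) (Finset.card_pos.2 ⟨p0, hfib_ne⟩)
  obtain ⟨q, hq⟩ := Finset.card_eq_one.1 h1
  have hqmem : q ∈ (fracSet x).filter (fun p => p.2 = v) := by
    rw [hq]
    exact Finset.mem_singleton_self q
  obtain ⟨hqE, hq2⟩ := Finset.mem_filter.1 hqmem
  have hnot : ∀ w, w ≠ q.1 → (w, v) ∉ fracSet x := by
    intro w hw hmem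
    have : (w, v) ∈ (fracSet x).filter (fun p => p.2 = v) := Finset.mem_filter.2 ⟨hmem, rfl⟩
    rw [hq] at this
    exact hw (congrArg Prod.fst (Finset.mem_singleton.1 this))
  set g : Fin n → ℕ := fun w => if x w v = 1 then 1 else 0 with hgdef
  have hgv : ∀ w, w ≠ q.1 → x w v = (g w : ℝ) := by
    intro w hw
    rcases not_frac_val (hx0 w v) (hx1 w v) (hnot w hw) with h | h <;>
      rw [hgdef] <;> dsimp only <;> rw [h] <;> norm_num
  have hsum : x q.1 v = (C v : ℝ) - (∑ w ∈ Finset.univ.erase q.1, (g w : ℝ)) := by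
    have h := hcol v
    rw [← Finset.add_sum_erase Finset.univ (fun w => x w v) (Finset.mem_univ q.1)] at h
    have h2 : ∑ w ∈ Finset.univ.erase q.1, x w v = ∑ w ∈ Finset.univ.erase q.1, (g w : ℝ) :=
      Finset.sum_congr rfl fun w hw => hgv w (Finset.ne_of_mem_erase hw)
    rw [h2] at h
    linarith
  have hfrac : 0 < x q.1 v ∧ x q.1 v < 1 := by
    rw [show x q.1 v = x q.1 q.2 by rw [← hq2]]
    exact mem_fracSet.1 hqE
  set m : ℕ := ∑ w ∈ Finset.univ.erase q.1, g w with hm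
  have hcastm : ((m : ℕ) : ℝ) = ∑ w ∈ Finset.univ.erase q.1, (g w : ℝ) := by
    rw [hm]
    push_cast
    rfl
  have ha : (m : ℝ) < C v := by
    rw [hcastm]
    linarith [hfrac.1, hsum]
  have hb : (C v : ℝ) < (m : ℝ) + 1 := by
    rw [hcastm]
    linarith [hfrac.2, hsum]
  have ha' : m < C v := by exact_mod_cast ha
  have hb' : C v < m + 1 := by exact_mod_cast hb
  omega

private lemma round_key {n : ℕ} (F : Fin n → Fin n → ℝ) (R C : Fin n → ℕ) :
    ∀ (k : ℕ) (x : Fin n → Fin n → ℝ), (fracSet x).card ≤ k →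
    (∀ u v, 0 ≤ x u v) → (∀ u v, x u v ≤ 1) →
    (∀ u, ∑ v, x u v = (R u : ℝ)) → (∀ v, ∑ u, x u v = (C v : ℝ)) →
    ∃ G : Fin n → Fin n → ℕ, (∀ u v, G u v ≤ 1) ∧ (∀ u, ∑ v, G u v = R u) ∧
      (∀ v, ∑ u, G u v = C v) ∧
      (∑ u, ∑ v, F u v * x u v) ≤ ∑ u, ∑ v, F u v * (G u v : ℝ) := by
  intro k
  induction k with
  | zero =>
    intro x hcard hx0 hx1 hrow hcol
    exact round_integral F R C x (Finset.card_eq_zero.1 (Nat.le_zero.1 hcard)) hx0 hx1 hrow hcol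
  | succ k ih =>
    intro x hcard hx0 hx1 hrow hcol
    rcases Finset.eq_empty_or_nonempty (fracSet x) with hempty | hEne
    · exact round_integral F R C x hempty hx0 hx1 hrow hcol
    · have hS1 : ∀ p ∈ fracSet x, p.1 ∈ (fracSet x).image Prod.fst :=
        fun p hp => Finset.mem_image_of_mem _ hp
      have hS2 : ∀ p ∈ fracSet x, p.2 ∈ (fracSet x).image Prod.snd :=
        fun p hp => Finset.mem_image_of_mem _ hp
      have hcards1 : 2 * ((fracSet x).image Prod.fst).card ≤ (fracSet x).card := by
        rw [Finset.card_eq_sum_card_fiberwise hS1]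
        calc 2 * ((fracSet x).image Prod.fst).card
            = ∑ _u ∈ (fracSet x).image Prod.fst, 2 := by
              rw [Finset.sum_const, smul_eq_mul]
              ring
          _ ≤ ∑ u ∈ (fracSet x).image Prod.fst, ((fracSet x).filter (fun p => p.1 = u)).card :=
              Finset.sum_le_sum fun u hu => row_degree_two R hx0 hx1 hrow hu
      have hcards2 : 2 * ((fracSet x).image Prod.snd).card ≤ (fracSet x).card := by
        rw [Finset.card_eq_sum_card_fiberwise hS2]
        calc 2 * ((fracSet x).image Prod.snd).card
            = ∑ _v ∈ (fracSet x).image Prod.snd, 2 := by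
              rw [Finset.sum_const, smul_eq_mul]
              ring
          _ ≤ ∑ v ∈ (fracSet x).image Prod.snd, ((fracSet x).filter (fun p => p.2 = v)).card :=
              Finset.sum_le_sum fun v hv => col_degree_two C hx0 hx1 hcol hv
      obtain ⟨y, hy_ne, hy_supp, hyrow, hycol⟩ :=
        exists_kernel_vector (fracSet x) hEne _ _ hS1 hS2 (by omega)
      have hperturb : ∃ x' : Fin n → Fin n → ℝ,
          fracSet x' ⊂ fracSet x ∧ (∀ u v, 0 ≤ x' u v) ∧ (∀ u v, x' u v ≤ 1) ∧
          (∀ u, ∑ v, x' u v = ∑ v, x u v) ∧ (∀ v, ∑ u, x' u v = ∑ u, x u v) ∧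
          (∑ u, ∑ v, F u v * x u v) ≤ ∑ u, ∑ v, F u v * x' u v := by
        rcases le_or_gt 0 (∑ u, ∑ v, F u v * y u v) with hg | hg
        · exact perturb F x y hx0 hx1 hy_supp hy_ne hyrow hycol hg
        · refine perturb F x (fun u v => -(y u v)) hx0 hx1 ?_ ?_ ?_ ?_ ?_
          · intro u v h
            show -(y u v) = 0
            rw [hy_supp u v h, neg_zero]
          · obtain ⟨u, v, h⟩ := hy_ne
            exact ⟨u, v, neg_ne_zero.2 h⟩
          · intro u
            show ∑ v, -(y u v) = 0
            rw [Finset.sum_neg_distrib, hyrow u, neg_zero]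
          · intro v
            show ∑ u, -(y u v) = 0
            rw [Finset.sum_neg_distrib, hycol v, neg_zero]
          · show 0 ≤ ∑ u, ∑ v, F u v * -(y u v)
            have : ∑ u, ∑ v, F u v * -(y u v) = -(∑ u, ∑ v, F u v * y u v) := by
              rw [← Finset.sum_neg_distrib]
              refine Finset.sum_congr rfl fun u _ => ?_
              rw [← Finset.sum_neg_distrib]
              exact Finset.sum_congr rfl fun v _ => by ring
            rw [this]
            linarith
      obtain ⟨x', hss, hx0', hx1', hrow', hcol', hobj'⟩ := hperturb
      have hcard' : (fracSet x').card ≤ k := by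
        have := Finset.card_lt_card hss
        omega
      obtain ⟨G, hG1, hGr, hGc, hGobj⟩ := ih x' hcard' hx0' hx1'
        (fun u => (hrow' u).trans (hrow u)) (fun v => (hcol' v).trans (hcol v))
      exact ⟨G, hG1, hGr, hGc, le_trans hobj' hGobj⟩

end AuxRounding

/-- For every positive `n`, every doubly stochastic `n × n` matrix `M`, and
every `0 ≤ κ ≤ (7n−4)/(8n−4)`, `(M, κ)` is a yes-instance of DEMAND-AWARE WEAK DIRECT
THROUGHPUT. -/
theorem weak_direct_throughput_lower_bound (n : ℕ) (hn : 0 < n)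
    (M : Matrix (Fin n) (Fin n) ℝ) (hM : DoublyStochastic M) (κ : ℝ)
    (h0 : 0 ≤ κ) (h1 : κ ≤ (7 * (n : ℝ) - 4) / (8 * (n : ℝ) - 4)) :
    DAWDTYes M κ := by
  classical
  obtain ⟨hM0, hMrow, hMcol⟩ := hM
  have hn1 : (1:ℝ) ≤ (n:ℝ) := by exact_mod_cast hn
  set s : ℕ := 2 * n - 1 with hsdef
  have hs1 : 1 ≤ s := by omega
  have hsR : (s : ℝ) = 2 * (n : ℝ) - 1 := by
    rw [hsdef, Nat.cast_sub (by omega : 1 ≤ 2 * n)]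
    push_cast
    ring
  have hspos : (0:ℝ) < (s:ℝ) := by
    rw [hsR]
    linarith
  have hA0 : ∀ u v : Fin n, (0:ℝ) ≤ (s:ℝ) * M u v := fun u v => mul_nonneg hspos.le (hM0 u v)
  have hArow : ∀ u, ∑ v, (s:ℝ) * M u v = (s:ℝ) := by
    intro u
    rw [← Finset.mul_sum, hMrow u, mul_one]
  have hAcol : ∀ v, ∑ u, (s:ℝ) * M u v = (s:ℝ) := by
    intro v
    rw [← Finset.mul_sum, hMcol v, mul_one]
  have hLrow_le : ∀ u, ∑ v, ⌊(s:ℝ) * M u v⌋₊ ≤ s := by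
    intro u
    have hcast : ((∑ v, ⌊(s:ℝ) * M u v⌋₊ : ℕ) : ℝ) ≤ (s:ℝ) := by
      push_cast
      calc ∑ v, ((⌊(s:ℝ) * M u v⌋₊ : ℕ) : ℝ) ≤ ∑ v, (s:ℝ) * M u v :=
            Finset.sum_le_sum fun v _ => Nat.floor_le (hA0 u v)
        _ = (s:ℝ) := hArow u
    exact_mod_cast hcast
  have hLcol_le : ∀ v, ∑ u, ⌊(s:ℝ) * M u v⌋₊ ≤ s := by
    intro v
    have hcast : ((∑ u, ⌊(s:ℝ) * M u v⌋₊ : ℕ) : ℝ) ≤ (s:ℝ) := by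
      push_cast
      calc ∑ u, ((⌊(s:ℝ) * M u v⌋₊ : ℕ) : ℝ) ≤ ∑ u, (s:ℝ) * M u v :=
            Finset.sum_le_sum fun u _ => Nat.floor_le (hA0 u v)
        _ = (s:ℝ) := hAcol v
    exact_mod_cast hcast
  have hF0 : ∀ u v : Fin n, (0:ℝ) ≤ (s:ℝ) * M u v - (⌊(s:ℝ) * M u v⌋₊ : ℝ) :=
    fun u v => sub_nonneg.2 (Nat.floor_le (hA0 u v))
  have hF1 : ∀ u v : Fin n, (s:ℝ) * M u v - (⌊(s:ℝ) * M u v⌋₊ : ℝ) ≤ 1 := by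
    intro u v
    have := Nat.lt_floor_add_one ((s:ℝ) * M u v)
    linarith
  have hFrow : ∀ u, ∑ v, ((s:ℝ) * M u v - (⌊(s:ℝ) * M u v⌋₊ : ℝ))
      = ((s - ∑ v, ⌊(s:ℝ) * M u v⌋₊ : ℕ) : ℝ) := by
    intro u
    rw [Finset.sum_sub_distrib, hArow u, Nat.cast_sub (hLrow_le u)]
    push_cast
    ring
  have hFcol : ∀ v, ∑ u, ((s:ℝ) * M u v - (⌊(s:ℝ) * M u v⌋₊ : ℝ))
      = ((s - ∑ u, ⌊(s:ℝ) * M u v⌋₊ : ℕ) : ℝ) := by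
    intro v
    rw [Finset.sum_sub_distrib, hAcol v, Nat.cast_sub (hLcol_le v)]
    push_cast
    ring
  obtain ⟨G, hG1, hGrow, hGcol, hobj⟩ := round_key
    (fun u v => (s:ℝ) * M u v - (⌊(s:ℝ) * M u v⌋₊ : ℝ))
    (fun u => s - ∑ v, ⌊(s:ℝ) * M u v⌋₊) (fun v => s - ∑ u, ⌊(s:ℝ) * M u v⌋₊)
    (fracSet (fun u v => (s:ℝ) * M u v - (⌊(s:ℝ) * M u v⌋₊ : ℝ))).card
    (fun u v => (s:ℝ) * M u v - (⌊(s:ℝ) * M u v⌋₊ : ℝ))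
    le_rfl hF0 hF1 hFrow hFcol
  unfold DAWDTYes
  refine ⟨Matrix.of (fun u v => ⌊(s:ℝ) * M u v⌋₊ + G u v),
    Matrix.of (fun u v => min (M u v) (((⌊(s:ℝ) * M u v⌋₊ + G u v : ℕ) : ℝ) / (s:ℝ))),
    ⟨?_, ?_⟩, ?_, ?_, ?_⟩
  · -- row sums of B
    intro i
    show ∑ j, (⌊(s:ℝ) * M i j⌋₊ + G i j) = 2 * n - 1
    rw [Finset.sum_add_distrib, hGrow i]
    have := hLrow_le i
    omega
  · -- column sums of B
    intro j
    show ∑ i, (⌊(s:ℝ) * M i j⌋₊ + G i j) = 2 * n - 1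
    rw [Finset.sum_add_distrib, hGcol j]
    have := hLcol_le j
    omega
  · -- 0 ≤ C ≤ M
    intro u v
    constructor
    · apply le_min (hM0 u v)
      positivity
    · exact min_le_left _ _
  · -- the throughput bound
    show κ * (n:ℝ) ≤ ∑ u, ∑ v, min (M u v) (((⌊(s:ℝ) * M u v⌋₊ + G u v : ℕ) : ℝ) / (s:ℝ))
    -- pointwise key inequality
    have hkey : ∀ u v : Fin n, (⌊(s:ℝ) * M u v⌋₊ : ℝ)
        + ((s:ℝ) * M u v - (⌊(s:ℝ) * M u v⌋₊ : ℝ)) * (G u v : ℝ)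
        ≤ (s:ℝ) * min (M u v) (((⌊(s:ℝ) * M u v⌋₊ + G u v : ℕ) : ℝ) / (s:ℝ)) := by
      intro u v
      have hLle : (⌊(s:ℝ) * M u v⌋₊ : ℝ) ≤ (s:ℝ) * M u v := Nat.floor_le (hA0 u v)
      have hBcast : ((⌊(s:ℝ) * M u v⌋₊ + G u v : ℕ) : ℝ)
          = (⌊(s:ℝ) * M u v⌋₊ : ℝ) + (G u v : ℝ) := by push_cast; ring
      rcases Nat.le_one_iff_eq_zero_or_eq_one.1 (hG1 u v) with h | h
      · rw [hBcast, h]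
        push_cast
        simp only [mul_zero, add_zero]
        have h1 : (⌊(s:ℝ) * M u v⌋₊ : ℝ) / (s:ℝ) ≤ M u v := by
          rw [div_le_iff₀ hspos]
          linarith [hLle, mul_comm (M u v) ((s:ℝ))]
        calc (⌊(s:ℝ) * M u v⌋₊ : ℝ)
            = (s:ℝ) * ((⌊(s:ℝ) * M u v⌋₊ : ℝ) / (s:ℝ)) := by field_simp
          _ ≤ (s:ℝ) * min (M u v) ((⌊(s:ℝ) * M u v⌋₊ : ℝ) / (s:ℝ)) :=
              mul_le_mul_of_nonneg_left (le_min h1 le_rfl) hspos.le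
      · rw [hBcast, h]
        push_cast
        have hAB : (s:ℝ) * M u v ≤ (⌊(s:ℝ) * M u v⌋₊ : ℝ) + 1 := by
          have := Nat.lt_floor_add_one ((s:ℝ) * M u v)
          linarith
        have hmin : min (M u v) (((⌊(s:ℝ) * M u v⌋₊ : ℝ) + 1) / (s:ℝ)) = M u v := by
          apply min_eq_left
          rw [le_div_iff₀ hspos]
          linarith [hAB, mul_comm (M u v) ((s:ℝ))]
        rw [hmin]
        ring_nf
        linarith
    -- sum everything
    have hsum1 : (∑ u, ∑ v, ((⌊(s:ℝ) * M u v⌋₊ : ℝ)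
        + ((s:ℝ) * M u v - (⌊(s:ℝ) * M u v⌋₊ : ℝ)) * (G u v : ℝ)))
        ≤ ∑ u, ∑ v, (s:ℝ) * min (M u v) (((⌊(s:ℝ) * M u v⌋₊ + G u v : ℕ) : ℝ) / (s:ℝ)) :=
      Finset.sum_le_sum fun u _ => Finset.sum_le_sum fun v _ => hkey u v
    have hsplit : (∑ u, ∑ v, ((⌊(s:ℝ) * M u v⌋₊ : ℝ)
        + ((s:ℝ) * M u v - (⌊(s:ℝ) * M u v⌋₊ : ℝ)) * (G u v : ℝ)))
        = (∑ u, ∑ v, (⌊(s:ℝ) * M u v⌋₊ : ℝ))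
          + ∑ u, ∑ v, ((s:ℝ) * M u v - (⌊(s:ℝ) * M u v⌋₊ : ℝ)) * (G u v : ℝ) := by
      rw [← Finset.sum_add_distrib]
      exact Finset.sum_congr rfl fun u _ => by rw [← Finset.sum_add_distrib]
    have hfactor : (∑ u, ∑ v, (s:ℝ) * min (M u v)
          (((⌊(s:ℝ) * M u v⌋₊ + G u v : ℕ) : ℝ) / (s:ℝ)))
        = (s:ℝ) * ∑ u, ∑ v, min (M u v) (((⌊(s:ℝ) * M u v⌋₊ + G u v : ℕ) : ℝ) / (s:ℝ)) := by
      rw [Finset.mul_sum]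
      exact Finset.sum_congr rfl fun u _ => by rw [Finset.mul_sum]
    have hLsum : (∑ u, ∑ v, (⌊(s:ℝ) * M u v⌋₊ : ℝ))
        = (∑ u, ∑ v, (s:ℝ) * M u v)
          - ∑ u, ∑ v, ((s:ℝ) * M u v - (⌊(s:ℝ) * M u v⌋₊ : ℝ)) := by
      rw [← Finset.sum_sub_distrib]
      refine Finset.sum_congr rfl fun u _ => ?_
      rw [← Finset.sum_sub_distrib]
      exact Finset.sum_congr rfl fun v _ => by ring
    have hAsum : (∑ u, ∑ v, (s:ℝ) * M u v) = (n:ℝ) * (s:ℝ) := by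
      rw [Finset.sum_congr rfl fun u (_ : u ∈ Finset.univ) => hArow u, Finset.sum_const,
        Finset.card_univ, Fintype.card_fin, nsmul_eq_mul]
    have hquarter : (∑ u, ∑ v, (((s:ℝ) * M u v - (⌊(s:ℝ) * M u v⌋₊ : ℝ))
        - ((s:ℝ) * M u v - (⌊(s:ℝ) * M u v⌋₊ : ℝ))
          * ((s:ℝ) * M u v - (⌊(s:ℝ) * M u v⌋₊ : ℝ))))
        ≤ (n:ℝ) * (n:ℝ) / 4 := by
      calc (∑ u, ∑ v, (((s:ℝ) * M u v - (⌊(s:ℝ) * M u v⌋₊ : ℝ))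
            - ((s:ℝ) * M u v - (⌊(s:ℝ) * M u v⌋₊ : ℝ))
              * ((s:ℝ) * M u v - (⌊(s:ℝ) * M u v⌋₊ : ℝ))))
          ≤ ∑ u : Fin n, ∑ v : Fin n, (1:ℝ)/4 := by
            refine Finset.sum_le_sum fun u _ => Finset.sum_le_sum fun v _ => ?_
            nlinarith [sq_nonneg ((s:ℝ) * M u v - (⌊(s:ℝ) * M u v⌋₊ : ℝ) - 1/2)]
        _ = (n:ℝ) * (n:ℝ) / 4 := by
            rw [Finset.sum_const, Finset.sum_const, Finset.card_univ, Fintype.card_fin,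
              nsmul_eq_mul, nsmul_eq_mul]
            ring
    have hFsplit : (∑ u, ∑ v, (((s:ℝ) * M u v - (⌊(s:ℝ) * M u v⌋₊ : ℝ))
        - ((s:ℝ) * M u v - (⌊(s:ℝ) * M u v⌋₊ : ℝ))
          * ((s:ℝ) * M u v - (⌊(s:ℝ) * M u v⌋₊ : ℝ))))
        = (∑ u, ∑ v, ((s:ℝ) * M u v - (⌊(s:ℝ) * M u v⌋₊ : ℝ)))
          - ∑ u, ∑ v, ((s:ℝ) * M u v - (⌊(s:ℝ) * M u v⌋₊ : ℝ))
            * ((s:ℝ) * M u v - (⌊(s:ℝ) * M u v⌋₊ : ℝ)) := by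
      rw [← Finset.sum_sub_distrib]
      exact Finset.sum_congr rfl fun u _ => by rw [← Finset.sum_sub_distrib]
    -- assemble
    have hT : (s:ℝ) * (n:ℝ) - (n:ℝ) * (n:ℝ) / 4
        ≤ (s:ℝ) * ∑ u, ∑ v, min (M u v) (((⌊(s:ℝ) * M u v⌋₊ + G u v : ℕ) : ℝ) / (s:ℝ)) := by
      rw [← hfactor]
      have := hobj
      linarith [hsum1, hsplit, hLsum, hAsum, hquarter, hFsplit]
    have h2pos : (0:ℝ) < 2 * (n:ℝ) - 1 := by linarith
    have h8pos : (0:ℝ) < 8 * (n:ℝ) - 4 := by linarith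
    have hfinal : κ * (n:ℝ) ≤ ((7 * (n:ℝ) - 4) / (8 * (n:ℝ) - 4)) * (n:ℝ) :=
      mul_le_mul_of_nonneg_right h1 (by positivity)
    have heq : ((7 * (n:ℝ) - 4) / (8 * (n:ℝ) - 4)) * (n:ℝ)
        = ((s:ℝ) * (n:ℝ) - (n:ℝ) * (n:ℝ) / 4) / (s:ℝ) := by
      rw [hsR]
      rw [div_mul_eq_mul_div, div_eq_div_iff h8pos.ne' h2pos.ne']
      ring
    have hdiv : ((s:ℝ) * (n:ℝ) - (n:ℝ) * (n:ℝ) / 4) / (s:ℝ)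
        ≤ ∑ u, ∑ v, min (M u v) (((⌊(s:ℝ) * M u v⌋₊ + G u v : ℕ) : ℝ) / (s:ℝ)) := by
      rw [div_le_iff₀ hspos]
      nlinarith [hT]
    rw [heq] at hfinal
    linarith
  · -- direct hosting: (2n-1) * C ≤ B
    intro u v
    show (2 * (n:ℝ) - 1) * min (M u v) (((⌊(s:ℝ) * M u v⌋₊ + G u v : ℕ) : ℝ) / (s:ℝ))
        ≤ ((⌊(s:ℝ) * M u v⌋₊ + G u v : ℕ) : ℝ)
    rw [← hsR]
    calc (s:ℝ) * min (M u v) (((⌊(s:ℝ) * M u v⌋₊ + G u v : ℕ) : ℝ) / (s:ℝ))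
        ≤ (s:ℝ) * (((⌊(s:ℝ) * M u v⌋₊ + G u v : ℕ) : ℝ) / (s:ℝ)) :=
          mul_le_mul_of_nonneg_left (min_le_right _ _) hspos.le
      _ = ((⌊(s:ℝ) * M u v⌋₊ + G u v : ℕ) : ℝ) := by field_simp
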